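/- Orthogonality of residual vectors: Let b be an invertible upper triangular n×n matrix over a field, and for indices 1 ≤ j < i ≤ n let Π_m denote the diagonal projection onto coordinates 1..m. Define u = (Π_i − Π_{j−1})·(b·e_i) and vᵀ = (e_jᵀ·b⁻¹)·(Π_i − Π_{j−1}). Then vᵀ·u = 0, and moreover (b·E_{ij}·b⁻¹) restricted to the lower-triangular-plus-diagonal part equals the corresponding part of u·vᵀ, i.e. (b E_{ij} b⁻¹)_{≤0} = (u vᵀ)_{≤0}. -/

import Mathlib

/-- Rank-one parametrization of co-adjoint orbits: let `b` be an invertible upper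
triangular matrix, `j < i`, `P = Π_i − Π_{j−1}` the projection onto coordinates `j..i`,
`u = P·(b·e_i)` and `vᵀ = (e_jᵀ·b⁻¹)·P`. Then `vᵀ·u = 0` and the
lower-triangular-plus-diagonal part of `b·E_{ij}·b⁻¹` equals that of `u·vᵀ`. -/
theorem rank_one_orbit_param {F : Type*} [Field F] {n : ℕ}
    (b : Matrix (Fin n) (Fin n) F) (hb : b.BlockTriangular id)
    (hdet : IsUnit b.det) (i j : Fin n) (hij : j < i) :
    let P : Matrix (Fin n) (Fin n) F :=
      Matrix.diagonal fun s => if j ≤ s ∧ s ≤ i then 1 else 0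
    let u : Fin n → F := P.mulVec (b.mulVec (Pi.single i 1))
    let v : Fin n → F := Matrix.vecMul (Matrix.vecMul (Pi.single j 1) b⁻¹) P
    dotProduct v u = 0 ∧
      ∀ p q : Fin n, q ≤ p →
        ((b * Matrix.single i j (1 : F) * b⁻¹ : Matrix (Fin n) (Fin n) F)) p q =
          Matrix.vecMulVec u v p q := by
  intro P u v
  have hI : Invertible b := b.invertibleOfIsUnitDet hdet
  have hbinv : (b⁻¹).BlockTriangular id :=
    Matrix.blockTriangular_inv_of_blockTriangular hb
  have hu : ∀ s, u s = (if j ≤ s ∧ s ≤ i then 1 else 0) * b s i := by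
    intro s
    simp [u, P, Matrix.mulVec_diagonal, Matrix.mulVec_single]
  have hv : ∀ t, v t = b⁻¹ j t * (if j ≤ t ∧ t ≤ i then 1 else 0) := by
    intro t
    simp [v, P, Matrix.vecMul_diagonal, Matrix.single_vecMul]
  constructor
  · have hsum : dotProduct v u = (b⁻¹ * b) j i := by
      rw [Matrix.mul_apply, dotProduct]
      refine Finset.sum_congr rfl fun t _ => ?_
      rw [hu t, hv t]
      by_cases h : j ≤ t ∧ t ≤ i
      · simp [h]
      · rcases not_and_or.mp h with h1 | h2
        · have hz : b⁻¹ j t = 0 := hbinv (by simpa using lt_of_not_ge h1)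
          simp [h, hz]
        · have hz : b t i = 0 := hb (by simpa using lt_of_not_ge h2)
          simp [h, hz]
    rw [hsum, Matrix.nonsing_inv_mul b hdet]
    simp [Matrix.one_apply, hij.ne]
  · intro p q hqp
    have hL : (b * Matrix.single i j (1 : F) * b⁻¹) p q = b p i * b⁻¹ j q := by
      rw [Matrix.mul_assoc, Matrix.mul_apply]
      simp [Matrix.mul_apply, Matrix.single, ite_and, Finset.mul_sum,
        mul_comm, mul_assoc]
    rw [hL, Matrix.vecMulVec_apply, hu p, hv q]
    by_cases hq : j ≤ q ∧ q ≤ i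
    · by_cases hp : j ≤ p ∧ p ≤ i
      · simp [hp, hq]
      · rcases not_and_or.mp hp with h1 | h2
        · exact absurd (hq.1.trans hqp) h1
        · have hz : b p i = 0 := hb (by simpa using lt_of_not_ge h2)
          simp [hp, hz]
    · rcases not_and_or.mp hq with h1 | h2
      · have hz : b⁻¹ j q = 0 := hbinv (by simpa using lt_of_not_ge h1)
        simp [hq, hz]
      · have hz : b p i = 0 := hb (by simpa using (lt_of_not_ge h2).trans_le hqp)
        simp [hq, hz]
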